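/- Consider unlabeled exponential-edge chip-firing with parameter t ≥ 0, starting from 2^{t+2} chips at site 0, and any complete firing sequence. For every k with 1 ≤ k ≤ t+1 and every j with 1 ≤ j ≤ 2(t−k)+3, the j-th firing at site k (counting chronologically from the first) occurs after the (j+1)-th firing at site k−1 and before the (j+2)-th firing at site k−1; symmetrically, for every k with −t−1 ≤ k ≤ −1 and every j with 1 ≤ j ≤ 2(t−|k|)+3, the j-th firing at site k occurs after the (j+1)-th firing at site k+1 and before the (j+2)-th firing at site k+1. Moreover, every firing move in the sequence, with the exception of the first firing at each of the sites −t,…,t, occurs with exactly L(i)+R(i) chips present at the fired site i, and hence leaves 0 chips at that site. -/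

import Mathlib

/-- `Ecount t k` is the number of edges between sites `k` and `k + 1` in the
exponential-edge graph with parameter `t`: `2^(t-k)` for `0 ≤ k ≤ t`,
`2^(t+k+1)` for `-t-1 ≤ k ≤ -1` (these are the `2^(t-j)` edges between sites
`-j` and `-j-1` for `0 ≤ j ≤ t`), and `1` otherwise. -/
def Ecount (t : ℕ) (k : ℤ) : ℕ :=
  if 0 ≤ k ∧ k ≤ (t : ℤ) then 2 ^ (t - k.toNat)
  else if -(t : ℤ) - 1 ≤ k ∧ k ≤ -1 then 2 ^ (t - (-k - 1).toNat)
  else 1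

/-- Number of edges joining site `i` to site `i - 1`. -/
def Lnum (t : ℕ) (i : ℤ) : ℕ := Ecount t (i - 1)

/-- Number of edges joining site `i` to site `i + 1`. -/
def Rnum (t : ℕ) (i : ℤ) : ℕ := Ecount t i

/-- An unlabeled exponential-edge firing of site `i`: legal when `i` holds at
least `Lnum t i + Rnum t i` chips; `Lnum t i` chips move to `i - 1` and
`Rnum t i` chips move to `i + 1`. -/
def UExpFire (t : ℕ) (c c' : ℤ → ℕ) (i : ℤ) : Prop :=
  Lnum t i + Rnum t i ≤ c i ∧
  c' = fun j => if j = i - 1 then c j + Lnum t i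
    else if j = i + 1 then c j + Rnum t i
    else if j = i then c j - (Lnum t i + Rnum t i)
    else c j


lemma Ecount_refl (t : ℕ) (k : ℤ) : Ecount t (-k - 1) = Ecount t k := by
  unfold Ecount
  rw [show -(-k - 1) - 1 = k from by ring]
  split_ifs <;> first | rfl | omega

lemma Ecount_nat (t k : ℕ) (h : k ≤ t) : Ecount t (k : ℤ) = 2 ^ (t - k) := by
  unfold Ecount
  rw [if_pos (by omega)]
  simp

lemma Ecount_of_ge (t : ℕ) (k : ℤ) (h : (t:ℤ) ≤ k) : Ecount t k = 1 := by
  unfold Ecount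
  split_ifs <;> first | rfl | omega | (rw [show t - k.toNat = 0 by omega, pow_zero])

lemma Ecount_of_le (t : ℕ) (k : ℤ) (h : k ≤ -(t:ℤ) - 1) : Ecount t k = 1 := by
  have e := Ecount_refl t (-k - 1)
  rw [show -(-k - 1) - 1 = k from by ring] at e
  rw [e]
  exact Ecount_of_ge t (-k - 1) (by omega)

lemma Lnum_neg (t : ℕ) (i : ℤ) : Lnum t (-i) = Rnum t i := by
  unfold Lnum Rnum
  exact Ecount_refl t i

lemma Rnum_neg (t : ℕ) (i : ℤ) : Rnum t (-i) = Lnum t i := by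
  unfold Lnum Rnum
  rw [show -i = -(i - 1) - 1 from by ring]
  exact Ecount_refl t (i - 1)

def fcnt (site : ℕ → ℤ) (s : ℤ) (u : ℕ) : ℕ :=
  ((Finset.range u).filter (fun v => site v = s)).card

lemma fcnt_zero (site : ℕ → ℤ) (s : ℤ) : fcnt site s 0 = 0 := rfl

lemma fcnt_succ (site : ℕ → ℤ) (s : ℤ) (u : ℕ) :
    fcnt site s (u + 1) = if site u = s then fcnt site s u + 1 else fcnt site s u := by
  unfold fcnt
  rw [Finset.range_add_one, Finset.filter_insert]
  split_ifs with h
  · rw [Finset.card_insert_of_notMem (by simp)]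
  · rfl

lemma fcnt_mono (site : ℕ → ℤ) (s : ℤ) {u v : ℕ} (h : u ≤ v) :
    fcnt site s u ≤ fcnt site s v :=
  Finset.card_le_card (Finset.filter_subset_filter _ (Finset.range_subset_range.2 h))

lemma conserve (t T : ℕ) (cfg : ℕ → ℤ → ℕ) (site : ℕ → ℤ)
    (hinit : cfg 0 = fun j => if j = 0 then 2 ^ (t + 2) else 0)
    (hstep : ∀ u < T, UExpFire t (cfg u) (cfg (u + 1)) (site u)) :
    ∀ u, u ≤ T → ∀ k : ℤ,
      (cfg u k : ℤ) + (Lnum t k + Rnum t k) * (fcnt site k u)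
        = (if k = 0 then 2 ^ (t + 2) else 0)
          + (Lnum t (k + 1)) * fcnt site (k + 1) u
          + (Rnum t (k - 1)) * fcnt site (k - 1) u := by
  intro u
  induction u with
  | zero =>
    intro _ k
    simp [hinit, fcnt_zero]
  | succ u ih =>
    intro hu k
    have hu' : u < T := by omega
    obtain ⟨hle, hc'⟩ := hstep u hu'
    set i := site u with hi
    have hcf : ∀ m : ℤ, cfg (u + 1) m = if m = i - 1 then cfg u m + Lnum t i
        else if m = i + 1 then cfg u m + Rnum t i
        else if m = i then cfg u m - (Lnum t i + Rnum t i) else cfg u m := by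
      intro m
      rw [hc']
    have hfk : ∀ m : ℤ, fcnt site m (u + 1)
        = if i = m then fcnt site m u + 1 else fcnt site m u :=
      fun m => fcnt_succ site m u
    by_cases h1 : k = i - 1
    · subst h1
      have IH := ih (by omega) (i - 1)
      have f1 : fcnt site (i - 1) (u + 1) = fcnt site (i - 1) u := by
        rw [hfk (i - 1), if_neg (by omega)]
      have f2 : fcnt site (i - 1 + 1) (u + 1) = fcnt site (i - 1 + 1) u + 1 := by
        rw [hfk (i - 1 + 1), if_pos (by omega)]
      have f3 : fcnt site (i - 1 - 1) (u + 1) = fcnt site (i - 1 - 1) u := by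
        rw [hfk (i - 1 - 1), if_neg (by omega)]
      have c1 : cfg (u + 1) (i - 1) = cfg u (i - 1) + Lnum t i := by
        rw [hcf (i - 1), if_pos rfl]
      rw [c1, f1, f2, f3]
      rw [show i - 1 + 1 = i from by ring] at IH ⊢
      push_cast at IH ⊢
      linarith
    · by_cases h2 : k = i + 1
      · subst h2
        have IH := ih (by omega) (i + 1)
        have f1 : fcnt site (i + 1) (u + 1) = fcnt site (i + 1) u := by
          rw [hfk (i + 1), if_neg (by omega)]
        have f2 : fcnt site (i + 1 + 1) (u + 1) = fcnt site (i + 1 + 1) u := by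
          rw [hfk (i + 1 + 1), if_neg (by omega)]
        have f3 : fcnt site (i + 1 - 1) (u + 1) = fcnt site (i + 1 - 1) u + 1 := by
          rw [hfk (i + 1 - 1), if_pos (by omega)]
        have c1 : cfg (u + 1) (i + 1) = cfg u (i + 1) + Rnum t i := by
          rw [hcf (i + 1), if_neg (by omega), if_pos rfl]
        rw [c1, f1, f2, f3]
        rw [show i + 1 - 1 = i from by ring] at IH ⊢
        push_cast at IH ⊢
        linarith
      · by_cases h3 : k = i
        · subst h3
          have IH := ih (by omega) i
          have f1 : fcnt site i (u + 1) = fcnt site i u + 1 := by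
            rw [hfk i, if_pos rfl]
          have f2 : fcnt site (i + 1) (u + 1) = fcnt site (i + 1) u := by
            rw [hfk (i + 1), if_neg (by omega)]
          have f3 : fcnt site (i - 1) (u + 1) = fcnt site (i - 1) u := by
            rw [hfk (i - 1), if_neg (by omega)]
          have c1 : cfg (u + 1) i = cfg u i - (Lnum t i + Rnum t i) := by
            rw [hcf i, if_neg (by omega), if_neg (by omega), if_pos rfl]
          rw [c1, f1, f2, f3, Nat.cast_sub hle]
          push_cast at IH ⊢
          linarith
        · have IH := ih (by omega) k
          have f1 : fcnt site k (u + 1) = fcnt site k u := by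
            rw [hfk k, if_neg (by omega)]
          have f2 : fcnt site (k + 1) (u + 1) = fcnt site (k + 1) u := by
            rw [hfk (k + 1), if_neg (by omega)]
          have f3 : fcnt site (k - 1) (u + 1) = fcnt site (k - 1) u := by
            rw [hfk (k - 1), if_neg (by omega)]
          have c1 : cfg (u + 1) k = cfg u k := by
            rw [hcf k, if_neg h1, if_neg h2, if_neg h3]
          rw [c1, f1, f2, f3]
          exact IH

lemma fcnt_neg (site : ℕ → ℤ) (s : ℤ) (u : ℕ) :
    fcnt (fun v => -site v) s u = fcnt site (-s) u := by
  unfold fcnt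
  congr 1
  apply Finset.filter_congr
  intro x _
  simp [neg_eq_iff_eq_neg]

def FInv (t : ℕ) (site : ℕ → ℤ) (u : ℕ) : Prop :=
  ∀ k : ℕ,
    fcnt site (k : ℤ) u ≤ fcnt site ((k : ℤ) + 1) u + 2 ∧
    (fcnt site ((k : ℤ) + 1) u = 0 ∨ fcnt site ((k : ℤ) + 1) u + 1 ≤ fcnt site (k : ℤ) u) ∧
    fcnt site (-(k : ℤ)) u ≤ fcnt site (-(k : ℤ) - 1) u + 2 ∧
    (fcnt site (-(k : ℤ) - 1) u = 0 ∨ fcnt site (-(k : ℤ) - 1) u + 1 ≤ fcnt site (-(k : ℤ)) u) ∧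
    fcnt site (k : ℤ) u ≤ 2 * t + 3 - 2 * k ∧ fcnt site (-(k : ℤ)) u ≤ 2 * t + 3 - 2 * k

lemma FInv_reflect (t : ℕ) (site : ℕ → ℤ) (u : ℕ) (h : FInv t site u) :
    FInv t (fun v => -site v) u := by
  intro k
  obtain ⟨h1, h2, h3, h4, h5, h6⟩ := h k
  rw [fcnt_neg, fcnt_neg, fcnt_neg, fcnt_neg,
    show -(k : ℤ) = -(k:ℤ) from rfl]
  rw [show -((k:ℤ) + 1) = -(k:ℤ) - 1 from by ring, show (-(-(k:ℤ))) = (k:ℤ) from by ring,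
    show -(-(k:ℤ) - 1) = (k:ℤ) + 1 from by ring]
  exact ⟨h3, h4, h1, h2, h6, h5⟩

lemma key (t T : ℕ) (cfg : ℕ → ℤ → ℕ) (site : ℕ → ℤ)
    (hinit : cfg 0 = fun j => if j = 0 then 2 ^ (t + 2) else 0)
    (hstep : ∀ u < T, UExpFire t (cfg u) (cfg (u + 1)) (site u))
    (u : ℕ) (hu : u < T) (hI : FInv t site u)
    (m : ℕ) (hm : 1 ≤ m) (hsite : site u = (m : ℤ)) :
    fcnt site ((m : ℤ) - 1) u = fcnt site (m : ℤ) u + 2 ∧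
    (1 ≤ fcnt site (m : ℤ) u → fcnt site ((m : ℤ) + 1) u + 1 = fcnt site (m : ℤ) u) ∧
    (fcnt site (m : ℤ) u = 0 → fcnt site ((m : ℤ) + 1) u = 0) ∧
    m ≤ t + 1 ∧
    fcnt site (m : ℤ) u + 1 ≤ 2 * t + 3 - 2 * m ∧
    (¬(fcnt site (m : ℤ) u = 0 ∧ m ≤ t) → cfg u (m : ℤ) = Lnum t (m : ℤ) + Rnum t (m : ℤ)) := by
  -- names for the three counts
  set a := fcnt site ((m : ℤ) - 1) u with ha
  set b := fcnt site (m : ℤ) u with hb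
  set c := fcnt site ((m : ℤ) + 1) u with hc
  -- invariant components
  have e1 : ((m - 1 : ℕ) : ℤ) = (m : ℤ) - 1 := by omega
  have e2 : ((m - 1 : ℕ) : ℤ) + 1 = (m : ℤ) := by omega
  have e3 : ((m + 1 : ℕ) : ℤ) = (m : ℤ) + 1 := by push_cast; ring
  obtain ⟨p1, p2, -, -, pc1, -⟩ := hI (m - 1)
  rw [e1] at p1 p2 pc1
  rw [show (m : ℤ) - 1 + 1 = (m : ℤ) from by ring] at p1 p2
  obtain ⟨q1, q2, -, -, qc1, -⟩ := hI m
  obtain ⟨-, -, -, -, rc1, -⟩ := hI (m + 1)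
  rw [e3] at rc1
  -- p1 : a ≤ b + 2, p2 : b = 0 ∨ b + 1 ≤ a
  -- q1 : b ≤ c + 2, q2 : c = 0 ∨ c + 1 ≤ b
  have hcons := conserve t T cfg site hinit hstep u (le_of_lt hu) (m : ℤ)
  rw [if_neg (by omega)] at hcons
  have hleg := (hstep u hu).1
  rw [hsite] at hleg
  rcases le_or_gt m t with hmt | hmt
  · -- middle case: 1 ≤ m ≤ t
    set w : ℤ := (2 : ℤ) ^ (t - m) with hw
    have hwpos : (0 : ℤ) < w := by positivity
    have vL : (Lnum t (m : ℤ) : ℤ) = 2 * w := by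
      unfold Lnum
      rw [← e1, Ecount_nat t (m - 1) (by omega)]
      rw [show t - (m - 1) = (t - m) + 1 from by omega]
      push_cast [pow_succ]
      ring
    have vR : (Rnum t (m : ℤ) : ℤ) = w := by
      unfold Rnum
      rw [Ecount_nat t m (by omega)]
      push_cast
      ring
    have vL1 : (Lnum t ((m : ℤ) + 1) : ℤ) = w := by
      unfold Lnum
      rw [show (m : ℤ) + 1 - 1 = (m : ℤ) from by ring, Ecount_nat t m (by omega)]
      push_cast
      ring
    have vR1 : (Rnum t ((m : ℤ) - 1) : ℤ) = 2 * w := by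
      unfold Rnum
      rw [← e1, Ecount_nat t (m - 1) (by omega)]
      rw [show t - (m - 1) = (t - m) + 1 from by omega]
      push_cast [pow_succ]
      ring
    have hE : (cfg u (m : ℤ) : ℤ) + (3 * w) * b = w * c + (2 * w) * a := by
      push_cast at hcons
      rw [vL, vR, vL1, vR1] at hcons
      linarith
    have hleg' : 3 * w ≤ (cfg u (m : ℤ) : ℤ) := by
      have : (Lnum t (m : ℤ) : ℤ) + (Rnum t (m : ℤ) : ℤ) ≤ (cfg u (m : ℤ) : ℤ) := by
        exact_mod_cast hleg
      rw [vL, vR] at this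
      linarith
    have hkey : 3 + 3 * (b : ℤ) ≤ (c : ℤ) + 2 * (a : ℤ) := by
      have h2 : w * (3 + 3 * (b : ℤ)) ≤ w * ((c : ℤ) + 2 * (a : ℤ)) := by nlinarith
      exact le_of_mul_le_mul_left h2 hwpos
    have hfacts : a = b + 2 ∧ (1 ≤ b → c + 1 = b) ∧ (b = 0 → c = 0) := by
      constructor
      · omega
      constructor
      · intro hb1
        omega
      · intro hb0
        omega
    obtain ⟨fa, fc, fz⟩ := hfacts
    refine ⟨fa, fun h => fc h, fz, by omega, by omega, ?_⟩
    intro hnot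
    have hb1 : 1 ≤ b := by
      by_contra hcon
      exact hnot ⟨by omega, hmt⟩
    have hcb : (c : ℤ) = (b : ℤ) - 1 := by
      have := fc hb1
      push_cast [← this]
      ring
    have hab : (a : ℤ) = (b : ℤ) + 2 := by exact_mod_cast fa
    have hcfg : (cfg u (m : ℤ) : ℤ) = 3 * w := by linear_combination hE + w * hcb + 2 * w * hab
    have : (cfg u (m : ℤ) : ℤ) = (Lnum t (m : ℤ) : ℤ) + (Rnum t (m : ℤ) : ℤ) := by
      rw [vL, vR, hcfg]
      ring
    exact_mod_cast this
  · -- outer case: m ≥ t + 1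
    have vL : (Lnum t (m : ℤ) : ℤ) = 1 := by
      unfold Lnum
      rw [Ecount_of_ge t ((m : ℤ) - 1) (by omega)]
      norm_num
    have vR : (Rnum t (m : ℤ) : ℤ) = 1 := by
      unfold Rnum
      rw [Ecount_of_ge t (m : ℤ) (by omega)]
      norm_num
    have vL1 : (Lnum t ((m : ℤ) + 1) : ℤ) = 1 := by
      unfold Lnum
      rw [show (m : ℤ) + 1 - 1 = (m : ℤ) from by ring, Ecount_of_ge t (m : ℤ) (by omega)]
      norm_num
    have vR1 : (Rnum t ((m : ℤ) - 1) : ℤ) = 1 := by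
      unfold Rnum
      rw [Ecount_of_ge t ((m : ℤ) - 1) (by omega)]
      norm_num
    have hE : (cfg u (m : ℤ) : ℤ) + 2 * b = (c : ℤ) + a := by
      push_cast at hcons
      rw [vL, vR, vL1, vR1] at hcons
      linarith
    have hleg' : 2 ≤ (cfg u (m : ℤ) : ℤ) := by
      have : (Lnum t (m : ℤ) : ℤ) + (Rnum t (m : ℤ) : ℤ) ≤ (cfg u (m : ℤ) : ℤ) := by
        exact_mod_cast hleg
      rw [vL, vR] at this
      linarith
    have hb0 : b = 0 := by omega
    have hc0 : c = 0 := by omega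
    have ha2 : a = 2 := by omega
    have hmt1 : m = t + 1 := by omega
    refine ⟨by omega, by omega, fun _ => hc0, by omega, by omega, fun _ => ?_⟩
    have : (cfg u (m : ℤ) : ℤ) = (Lnum t (m : ℤ) : ℤ) + (Rnum t (m : ℤ) : ℤ) := by
      rw [vL, vR]
      omega
    exact_mod_cast this

lemma key0 (t T : ℕ) (cfg : ℕ → ℤ → ℕ) (site : ℕ → ℤ)
    (hinit : cfg 0 = fun j => if j = 0 then 2 ^ (t + 2) else 0)
    (hstep : ∀ u < T, UExpFire t (cfg u) (cfg (u + 1)) (site u))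
    (u : ℕ) (hu : u < T) (hI : FInv t site u) (hsite : site u = 0) :
    (1 ≤ fcnt site 0 u → fcnt site 1 u + 1 = fcnt site 0 u ∧
      fcnt site (-1) u + 1 = fcnt site 0 u ∧ cfg u 0 = Lnum t 0 + Rnum t 0) ∧
    (fcnt site 0 u = 0 → fcnt site 1 u = 0 ∧ fcnt site (-1) u = 0) ∧
    fcnt site 0 u + 1 ≤ 2 * t + 3 := by
  set b := fcnt site 0 u with hb
  set c := fcnt site 1 u with hc
  set c' := fcnt site (-1) u with hc'
  obtain ⟨q1, q2, r1, r2, -, -⟩ := hI 0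
  simp only [Nat.cast_zero, zero_add, neg_zero, zero_sub] at q1 q2 r1 r2
  obtain ⟨-, -, -, -, sc1, -⟩ := hI 1
  have sc1' : c ≤ 2 * t + 1 := by
    simp only [Nat.cast_one] at sc1
    omega
  have hcons := conserve t T cfg site hinit hstep u (le_of_lt hu) 0
  rw [if_pos rfl] at hcons
  have hleg := (hstep u hu).1
  rw [hsite] at hleg
  set w : ℤ := (2 : ℤ) ^ t with hw
  have hwpos : (0 : ℤ) < w := by positivity
  have vL : (Lnum t 0 : ℤ) = w := by
    unfold Lnum
    rw [show (0 : ℤ) - 1 = -(0:ℤ) - 1 from by ring, Ecount_refl t 0,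
      show ((0:ℤ)) = ((0:ℕ):ℤ) from rfl, Ecount_nat t 0 (by omega)]
    norm_num
    exact hw.symm
  have vR : (Rnum t 0 : ℤ) = w := by
    unfold Rnum
    rw [show ((0:ℤ)) = ((0:ℕ):ℤ) from rfl, Ecount_nat t 0 (by omega)]
    norm_num
    exact hw.symm
  have vL1 : (Lnum t (0 + 1) : ℤ) = w := by
    unfold Lnum
    rw [show (0 : ℤ) + 1 - 1 = ((0:ℕ):ℤ) from by norm_num, Ecount_nat t 0 (by omega)]
    norm_num
    exact hw.symm
  have vR1 : (Rnum t (0 - 1) : ℤ) = w := by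
    unfold Rnum
    rw [show (0 : ℤ) - 1 = -(0:ℤ) - 1 from by ring, Ecount_refl t 0,
      show ((0:ℤ)) = ((0:ℕ):ℤ) from rfl, Ecount_nat t 0 (by omega)]
    norm_num
    exact hw.symm
  have h0 : fcnt site ((0:ℕ):ℤ) u = b := rfl
  have h1 : fcnt site (0 + 1 : ℤ) u = c := by norm_num; exact hc.symm
  have h1' : fcnt site (0 - 1 : ℤ) u = c' := by norm_num; exact hc'.symm
  have hE : (cfg u 0 : ℤ) + (2 * w) * b = 4 * w + w * c + w * c' := by
    rw [h1, h1'] at hcons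
    rw [vL, vR, vL1, vR1] at hcons
    have h4 : ((2 : ℤ) ^ (t + 2)) = 4 * w := by
      rw [hw, pow_add]
      ring
    rw [h4] at hcons
    linarith
  have hleg' : 2 * w ≤ (cfg u 0 : ℤ) := by
    have : (Lnum t 0 : ℤ) + (Rnum t 0 : ℤ) ≤ (cfg u 0 : ℤ) := by exact_mod_cast hleg
    rw [vL, vR] at this
    linarith
  have hkey : 2 + 2 * (b : ℤ) ≤ 4 + (c : ℤ) + (c' : ℤ) := by
    have h2 : w * (2 + 2 * (b : ℤ)) ≤ w * (4 + (c : ℤ) + (c' : ℤ)) := by nlinarith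
    exact le_of_mul_le_mul_left h2 hwpos
  constructor
  · intro hb1
    have fc : c + 1 = b := by omega
    have fc' : c' + 1 = b := by omega
    refine ⟨fc, fc', ?_⟩
    have hcb : (c : ℤ) = (b : ℤ) - 1 := by exact_mod_cast by omega
    have hcb' : (c' : ℤ) = (b : ℤ) - 1 := by exact_mod_cast by omega
    have hcfg : (cfg u 0 : ℤ) = 2 * w := by linear_combination hE + w * hcb + w * hcb'
    have : (cfg u 0 : ℤ) = (Lnum t 0 : ℤ) + (Rnum t 0 : ℤ) := by
      rw [vL, vR, hcfg]
      ring
    exact_mod_cast this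
  constructor
  · intro hb0
    omega
  · omega

lemma step_pos (t T : ℕ) (cfg : ℕ → ℤ → ℕ) (site : ℕ → ℤ)
    (hinit : cfg 0 = fun j => if j = 0 then 2 ^ (t + 2) else 0)
    (hstep : ∀ u < T, UExpFire t (cfg u) (cfg (u + 1)) (site u))
    (u : ℕ) (hu : u < T) (hI : FInv t site u)
    (m : ℕ) (hm : 1 ≤ m) (hsite : site u = (m : ℤ)) :
    FInv t site (u + 1) := by
  obtain ⟨fa, fc, fz, hmt, hcap, -⟩ := key t T cfg site hinit hstep u hu hI m hm hsite
  have upd_ne : ∀ s : ℤ, s ≠ (m : ℤ) → fcnt site s (u + 1) = fcnt site s u := by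
    intro s hs
    rw [fcnt_succ, hsite, if_neg (fun h => hs h.symm)]
  have upd_eq : fcnt site (m : ℤ) (u + 1) = fcnt site (m : ℤ) u + 1 := by
    rw [fcnt_succ, hsite, if_pos rfl]
  intro k
  obtain ⟨i1, i2, i3, i4, i5, i6⟩ := hI k
  have n1 : fcnt site (-(k : ℤ)) (u + 1) = fcnt site (-(k : ℤ)) u := upd_ne _ (by omega)
  have n2 : fcnt site (-(k : ℤ) - 1) (u + 1) = fcnt site (-(k : ℤ) - 1) u := upd_ne _ (by omega)
  by_cases h1 : (k : ℤ) = (m : ℤ)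
  · have hk : k = m := by exact_mod_cast h1
    subst hk
    have p1 : fcnt site (k : ℤ) (u + 1) = fcnt site (k : ℤ) u + 1 := upd_eq
    have p2 : fcnt site ((k : ℤ) + 1) (u + 1) = fcnt site ((k : ℤ) + 1) u := upd_ne _ (by omega)
    exact ⟨by omega, by omega, by omega, by omega, by omega, by omega⟩
  · by_cases h2 : (k : ℤ) + 1 = (m : ℤ)
    · have p1 : fcnt site (k : ℤ) (u + 1) = fcnt site (k : ℤ) u := upd_ne _ h1
      have p2 : fcnt site ((k : ℤ) + 1) (u + 1) = fcnt site ((k : ℤ) + 1) u + 1 := by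
        rw [h2]
        exact upd_eq
      have e1 : fcnt site ((k : ℤ) + 1) u = fcnt site (m : ℤ) u := by rw [h2]
      have e2 : fcnt site (k : ℤ) u = fcnt site ((m : ℤ) - 1) u := by
        rw [show (k : ℤ) = (m : ℤ) - 1 from by omega]
      exact ⟨by omega, by omega, by omega, by omega, by omega, by omega⟩
    · have p1 : fcnt site (k : ℤ) (u + 1) = fcnt site (k : ℤ) u := upd_ne _ h1
      have p2 : fcnt site ((k : ℤ) + 1) (u + 1) = fcnt site ((k : ℤ) + 1) u := upd_ne _ h2
      exact ⟨by omega, by omega, by omega, by omega, by omega, by omega⟩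

lemma step_zero (t T : ℕ) (cfg : ℕ → ℤ → ℕ) (site : ℕ → ℤ)
    (hinit : cfg 0 = fun j => if j = 0 then 2 ^ (t + 2) else 0)
    (hstep : ∀ u < T, UExpFire t (cfg u) (cfg (u + 1)) (site u))
    (u : ℕ) (hu : u < T) (hI : FInv t site u) (hsite : site u = 0) :
    FInv t site (u + 1) := by
  obtain ⟨f1, f0, hcap⟩ := key0 t T cfg site hinit hstep u hu hI hsite
  have upd_ne : ∀ s : ℤ, s ≠ 0 → fcnt site s (u + 1) = fcnt site s u := by
    intro s hs
    rw [fcnt_succ, hsite, if_neg (fun h => hs h.symm)]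
  have upd_eq : fcnt site 0 (u + 1) = fcnt site 0 u + 1 := by
    rw [fcnt_succ, hsite, if_pos rfl]
  intro k
  obtain ⟨i1, i2, i3, i4, i5, i6⟩ := hI k
  by_cases hk : k = 0
  · subst hk
    norm_num at i1 i2 i3 i4 i5 i6 ⊢
    have p0 : fcnt site 0 (u + 1) = fcnt site 0 u + 1 := upd_eq
    have p1 : fcnt site 1 (u + 1) = fcnt site 1 u := upd_ne _ (by omega)
    have p2 : fcnt site (-1) (u + 1) = fcnt site (-1) u := upd_ne _ (by omega)
    exact ⟨by omega, by omega, by omega, by omega, by omega⟩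
  · have p1 : fcnt site (k : ℤ) (u + 1) = fcnt site (k : ℤ) u := upd_ne _ (by omega)
    have p2 : fcnt site ((k : ℤ) + 1) (u + 1) = fcnt site ((k : ℤ) + 1) u := upd_ne _ (by omega)
    have p3 : fcnt site (-(k : ℤ)) (u + 1) = fcnt site (-(k : ℤ)) u := upd_ne _ (by omega)
    have p4 : fcnt site (-(k : ℤ) - 1) (u + 1) = fcnt site (-(k : ℤ) - 1) u := upd_ne _ (by omega)
    exact ⟨by omega, by omega, by omega, by omega, by omega, by omega⟩

lemma UExpFire_neg (t : ℕ) (c c' : ℤ → ℕ) (i : ℤ) (h : UExpFire t c c' i) :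
    UExpFire t (fun k => c (-k)) (fun k => c' (-k)) (-i) := by
  obtain ⟨h1, h2⟩ := h
  constructor
  · simpa [Lnum_neg, Rnum_neg, add_comm] using h1
  · funext k
    have hk := congrFun h2 (-k)
    simp only at hk ⊢
    rw [hk, Lnum_neg, Rnum_neg]
    by_cases e1 : k = -i - 1
    · rw [if_pos e1, if_neg (by omega), if_pos (by omega)]
    · by_cases e2 : k = -i + 1
      · rw [if_neg e1, if_pos e2, if_pos (by omega)]
      · by_cases e3 : k = -i
        · rw [if_neg e1, if_neg e2, if_pos e3, if_neg (by omega), if_neg (by omega),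
            if_pos (by omega), add_comm (Rnum t i) (Lnum t i)]
        · rw [if_neg e1, if_neg e2, if_neg e3, if_neg (by omega), if_neg (by omega),
            if_neg (by omega)]

lemma hinit_neg (t : ℕ) (cfg : ℕ → ℤ → ℕ)
    (hinit : cfg 0 = fun j => if j = 0 then 2 ^ (t + 2) else 0) :
    (fun (u : ℕ) (k : ℤ) => cfg u (-k)) 0 = fun j => if j = 0 then 2 ^ (t + 2) else 0 := by
  funext j
  simp only [hinit]
  by_cases hj : j = 0
  · rw [if_pos (by omega), if_pos hj]
  · rw [if_neg (by omega), if_neg hj]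

lemma hstep_neg (t T : ℕ) (cfg : ℕ → ℤ → ℕ) (site : ℕ → ℤ)
    (hstep : ∀ u < T, UExpFire t (cfg u) (cfg (u + 1)) (site u)) :
    ∀ u < T, UExpFire t ((fun (u : ℕ) (k : ℤ) => cfg u (-k)) u)
      ((fun (u : ℕ) (k : ℤ) => cfg u (-k)) (u + 1)) ((fun v => -site v) u) :=
  fun u hu => UExpFire_neg t (cfg u) (cfg (u + 1)) (site u) (hstep u hu)

lemma master (t T : ℕ) (cfg : ℕ → ℤ → ℕ) (site : ℕ → ℤ)
    (hinit : cfg 0 = fun j => if j = 0 then 2 ^ (t + 2) else 0)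
    (hstep : ∀ u < T, UExpFire t (cfg u) (cfg (u + 1)) (site u)) :
    ∀ u, u ≤ T → FInv t site u := by
  intro u
  induction u with
  | zero =>
    intro _ k
    simp [fcnt_zero]
  | succ u ih =>
    intro hu
    have hu' : u < T := by omega
    have hIu := ih (by omega)
    rcases lt_trichotomy (site u) 0 with hs | hs | hs
    · -- negative site: reflect
      set nsite := fun v => -site v with hnsite
      set ncfg := fun (v : ℕ) (k : ℤ) => cfg v (-k) with hncfg
      have hm : 1 ≤ (-(site u)).toNat := by omega
      have hns : nsite u = (((-(site u)).toNat : ℕ) : ℤ) := by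
        simp only [hnsite]
        omega
      have hres := step_pos t T ncfg nsite (hinit_neg t cfg hinit)
        (hstep_neg t T cfg site hstep) u hu' (FInv_reflect t site u hIu)
        (-(site u)).toNat hm hns
      have hback := FInv_reflect t nsite (u + 1) hres
      have he : (fun v => -nsite v) = site := by
        funext v
        simp [hnsite]
      rwa [he] at hback
    · exact step_zero t T cfg site hinit hstep u hu' hIu hs
    · have hm : 1 ≤ (site u).toNat := by omega
      have hns : site u = (((site u).toNat : ℕ) : ℤ) := by omega
      exact step_pos t T cfg site hinit hstep u hu' hIu (site u).toNat hm hns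


/-- `u` is the time of the `j`-th firing at site `s`, counting chronologically
from the first. -/
def NthFiring (site : ℕ → ℤ) (T : ℕ) (s : ℤ) (j : ℕ) (u : ℕ) : Prop :=
  u < T ∧ site u = s ∧
    ((Finset.range u).filter (fun v => site v = s)).card = j - 1


lemma NthFiring_fcnt {site T s j u} (h : NthFiring site T s j u) :
    u < T ∧ site u = s ∧ fcnt site s u = j - 1 := h

lemma NthFiring_neg (site : ℕ → ℤ) (T : ℕ) (s : ℤ) (j u : ℕ)
    (h : NthFiring site T (-s) j u) : NthFiring (fun v => -site v) T s j u := by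
  obtain ⟨h1, h2, h3⟩ := h
  refine ⟨h1, show -site u = s by omega, ?_⟩
  show fcnt (fun v => -site v) s u = j - 1
  rw [fcnt_neg]
  exact h3

lemma part1 (t T : ℕ) (cfg : ℕ → ℤ → ℕ) (site : ℕ → ℤ)
    (hinit : cfg 0 = fun j => if j = 0 then 2 ^ (t + 2) else 0)
    (hstep : ∀ u < T, UExpFire t (cfg u) (cfg (u + 1)) (site u))
    (k : ℕ) (hk : 1 ≤ k) (j : ℕ) (hj : 1 ≤ j) :
    (∀ u v, NthFiring site T (k : ℤ) j u → NthFiring site T ((k : ℤ) - 1) (j + 1) v → v < u) ∧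
    (∀ u w, NthFiring site T (k : ℤ) j u → NthFiring site T ((k : ℤ) - 1) (j + 2) w → u < w) := by
  have main : ∀ u, NthFiring site T (k : ℤ) j u → u < T ∧ site u = (k : ℤ) ∧
      fcnt site ((k : ℤ) - 1) u = j + 1 := by
    intro u hu
    obtain ⟨huT, hsu, hcard⟩ := NthFiring_fcnt hu
    have hI := master t T cfg site hinit hstep u (le_of_lt huT)
    obtain ⟨fa, -, -, -, -, -⟩ := key t T cfg site hinit hstep u huT hI k hk hsu
    exact ⟨huT, hsu, by omega⟩
  constructor
  · intro u v hu hv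
    obtain ⟨huT, hsu, h1⟩ := main u hu
    obtain ⟨hvT, hsv, hcv⟩ := NthFiring_fcnt hv
    by_contra hcon
    have hmono : fcnt site ((k : ℤ) - 1) u ≤ fcnt site ((k : ℤ) - 1) v :=
      fcnt_mono site _ (by omega)
    omega
  · intro u w hu hw
    obtain ⟨huT, hsu, h1⟩ := main u hu
    obtain ⟨hwT, hsw, hcw⟩ := NthFiring_fcnt hw
    by_contra hcon
    have hwu : w < u := by
      rcases Nat.lt_or_ge w u with h | h
      · exact h
      · exfalso
        have hwu' : w = u := by omega
        rw [hwu', hsu] at hsw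
        omega
    have hmono : fcnt site ((k : ℤ) - 1) (w + 1) ≤ fcnt site ((k : ℤ) - 1) u :=
      fcnt_mono site _ (by omega)
    rw [fcnt_succ, if_pos hsw] at hmono
    omega


/-- Grid structure for exponential-edge chip-firing with `2^(t+2)` chips at the
origin.  In every complete firing sequence: for `1 ≤ k ≤ t + 1` and
`1 ≤ j ≤ 2(t-k) + 3`, the `j`-th firing at site `k` occurs after the `(j+1)`-th
firing at site `k - 1` and before the `(j+2)`-th firing at site `k - 1`;
symmetrically for the negative sites; and every firing move except the first
firing at each of the sites `-t, …, t` occurs with exactly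
`Lnum (site) + Rnum (site)` chips present, hence leaves `0` chips behind. -/
theorem stmt8 (t : ℕ) (T : ℕ) (cfg : ℕ → ℤ → ℕ) (site : ℕ → ℤ)
    (hinit : cfg 0 = fun j => if j = 0 then 2 ^ (t + 2) else 0)
    (hstep : ∀ u < T, UExpFire t (cfg u) (cfg (u + 1)) (site u))
    (hcomplete : ∀ i : ℤ, cfg T i < Lnum t i + Rnum t i) :
    (∀ k : ℕ, 1 ≤ k → k ≤ t + 1 → ∀ j : ℕ, 1 ≤ j → (j : ℤ) ≤ 2 * ((t : ℤ) - (k : ℤ)) + 3 →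
      (∀ u v, NthFiring site T (k : ℤ) j u → NthFiring site T ((k : ℤ) - 1) (j + 1) v → v < u) ∧
      (∀ u w, NthFiring site T (k : ℤ) j u → NthFiring site T ((k : ℤ) - 1) (j + 2) w → u < w)) ∧
    (∀ k : ℕ, 1 ≤ k → k ≤ t + 1 → ∀ j : ℕ, 1 ≤ j → (j : ℤ) ≤ 2 * ((t : ℤ) - (k : ℤ)) + 3 →
      (∀ u v, NthFiring site T (-(k : ℤ)) j u → NthFiring site T (-(k : ℤ) + 1) (j + 1) v → v < u) ∧
      (∀ u w, NthFiring site T (-(k : ℤ)) j u → NthFiring site T (-(k : ℤ) + 1) (j + 2) w → u < w)) ∧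
    (∀ u, u < T →
      ¬((((Finset.range u).filter (fun v => site v = site u)).card = 0 ∧ (site u).natAbs ≤ t)) →
      cfg u (site u) = Lnum t (site u) + Rnum t (site u) ∧ cfg (u + 1) (site u) = 0) := by
  refine ⟨?_, ?_, ?_⟩
  · intro k hk1 hk2 j hj1 hj2
    exact part1 t T cfg site hinit hstep k hk1 j hj1
  · intro k hk1 hk2 j hj1 hj2
    have hp := part1 t T (fun v m => cfg v (-m)) (fun v => -site v)
      (hinit_neg t cfg hinit) (hstep_neg t T cfg site hstep) k hk1 j hj1
    constructor
    · intro u v hu hv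
      have hu' := NthFiring_neg site T (k : ℤ) j u hu
      rw [show -(k : ℤ) + 1 = -((k : ℤ) - 1) from by ring] at hv
      have hv' := NthFiring_neg site T ((k : ℤ) - 1) (j + 1) v hv
      exact hp.1 u v hu' hv'
    · intro u w hu hw
      have hu' := NthFiring_neg site T (k : ℤ) j u hu
      rw [show -(k : ℤ) + 1 = -((k : ℤ) - 1) from by ring] at hw
      have hw' := NthFiring_neg site T ((k : ℤ) - 1) (j + 2) w hw
      exact hp.2 u w hu' hw'
  · intro u huT hnot
    have hI := master t T cfg site hinit hstep u (le_of_lt huT)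
    obtain ⟨hle, hc'⟩ := hstep u huT
    have hnot' : ¬(fcnt site (site u) u = 0 ∧ (site u).natAbs ≤ t) := hnot
    have hfirst : cfg u (site u) = Lnum t (site u) + Rnum t (site u) := by
      rcases lt_trichotomy (site u) 0 with hs | hs | hs
      · -- negative site
        set m := (-(site u)).toNat with hm
        have hm1 : 1 ≤ m := by omega
        have hsm : (fun v => -site v) u = ((m : ℕ) : ℤ) := by
          show -site u = ((m : ℕ) : ℤ)
          omega
        obtain ⟨-, -, -, -, -, hexact⟩ := key t T (fun v q => cfg v (-q)) (fun v => -site v)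
          (hinit_neg t cfg hinit) (hstep_neg t T cfg site hstep) u huT
          (FInv_reflect t site u hI) m hm1 hsm
        have hcond : ¬(fcnt (fun v => -site v) ((m : ℕ) : ℤ) u = 0 ∧ m ≤ t) := by
          rw [fcnt_neg, show -((m : ℕ) : ℤ) = site u from by omega]
          intro ⟨hc1, hc2⟩
          exact hnot' ⟨hc1, by omega⟩
        have := hexact hcond
        rw [show -((m : ℕ) : ℤ) = site u from by omega] at this
        rw [this]
        have e1 : Lnum t ((m : ℕ) : ℤ) = Rnum t (site u) := by
          rw [show ((m : ℕ) : ℤ) = -(site u) from by omega]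
          exact Lnum_neg t (site u)
        have e2 : Rnum t ((m : ℕ) : ℤ) = Lnum t (site u) := by
          rw [show ((m : ℕ) : ℤ) = -(site u) from by omega]
          exact Rnum_neg t (site u)
        rw [e1, e2]
        ring
      · -- zero site
        obtain ⟨f1, -, -⟩ := key0 t T cfg site hinit hstep u huT hI hs
        have hb : 1 ≤ fcnt site 0 u := by
          rcases Nat.eq_zero_or_pos (fcnt site 0 u) with h0 | h0
          · exfalso
            apply hnot'
            rw [hs]
            exact ⟨h0, by simp⟩
          · exact h0
        rw [hs]
        exact (f1 hb).2.2
      · -- positive site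
        set m := (site u).toNat with hm
        have hm1 : 1 ≤ m := by omega
        have hsm : site u = ((m : ℕ) : ℤ) := by omega
        obtain ⟨-, -, -, -, -, hexact⟩ := key t T cfg site hinit hstep u huT hI m hm1 hsm
        rw [hsm]
        apply hexact
        rw [← hsm]
        intro ⟨hc1, hc2⟩
        exact hnot' ⟨hc1, by omega⟩
    refine ⟨hfirst, ?_⟩
    have := congrFun hc' (site u)
    rw [this, if_neg (by omega), if_neg (by omega), if_pos rfl]
    omega
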